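/- AM-GAN generator loss decomposition: for a generated sample with one-hot target v(y), y ∈ {1,…,K}, and softmax output D over K+1 classes with all entries positive, H(v(y), D) = H(R(v(y)), R(D)) + H([1,0], [D_r, D_{K+1}]), i.e., the AM-GAN loss equals the auxiliary-classifier cross-entropy over the K real classes plus the LabelGAN real-vs-fake cross-entropy. -/
import Mathlib


open Real Finset

/-- AM-GAN generator loss decomposition: with one-hot target `v(y)` and a
strictly positive probability vector `D` over `K+1` classes,
`H(v(y), D) = H(R(v(y)), R(D)) + H([1,0],[D_r, D_{K+1}])`. -/
theorem stmt11 {K : ℕ} (hK : 1 ≤ K) (y : Fin K) (D : Fin (K + 1) → ℝ)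
    (hD_pos : ∀ i, 0 < D i) (hD_sum : ∑ i, D i = 1)
    (Dr : ℝ) (hDr : Dr = ∑ k : Fin K, D k.castSucc) :
    (-∑ i, (if i = y.castSucc then (1 : ℝ) else 0) * Real.log (D i)) =
      (-∑ k : Fin K, (if k = y then (1 : ℝ) else 0) *
          Real.log (D k.castSucc / Dr)) +
      (-((1 : ℝ) * Real.log Dr + (0 : ℝ) * Real.log (D (Fin.last K)))) := by
  have hDr_pos : 0 < Dr := by
    rw [hDr]
    exact Finset.sum_pos (fun i _ => hD_pos _) (by simp [Finset.univ_nonempty_iff, ← Fin.pos_iff_nonempty]; omega)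
  rw [Finset.sum_eq_single y.castSucc (by intros b _ h; simp [h]) (by simp),
      Finset.sum_eq_single y (by intros b _ h; simp [h]) (by simp)]
  simp only [eq_self_iff_true, if_true, one_mul]
  rw [Real.log_div (ne_of_gt (hD_pos _)) (ne_of_gt hDr_pos)]
  ring
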